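/- Let B be a unital complex Banach algebra, S : B → B a unital surjective linear spectral isometry, and I a closed two-sided ideal of B such that the quotient B/I is semisimple. If r(Sy + I) = r(y + I) in B/I for all y ∈ B, then S(I) ⊆ I. -/

import Mathlib

open scoped NNReal ENNReal Nat

section Helpers

variable {A : Type*} [NormedRing A] [NormedAlgebra ℂ A] [CompleteSpace A]

private lemma nnnorm_le_spectralRadius_of_mem' {a : A} {μ : ℂ} (h : μ ∈ spectrum ℂ a) :
    (‖μ‖₊ : ℝ≥0∞) ≤ spectralRadius ℂ a :=
  le_iSup₂ (f := fun k (_ : k ∈ spectrum ℂ a) => (‖k‖₊ : ℝ≥0∞)) μ h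

private lemma eq_zero_of_mem_spectrum_of_radius_zero' {a : A} (ha : spectralRadius ℂ a = 0)
    {μ : ℂ} (h : μ ∈ spectrum ℂ a) : μ = 0 := by
  have h1 := nnnorm_le_spectralRadius_of_mem' h
  rw [ha, le_zero_iff] at h1
  simpa using h1

private lemma spectralRadius_units_conjugate' {R A' : Type*} [NormedField R] [Ring A']
    [Algebra R A'] (u : A'ˣ) (x : A') :
    spectralRadius R ((u : A') * x * (↑u⁻¹ : A')) = spectralRadius R x := by
  unfold spectralRadius
  rw [spectrum.units_conjugate]

private lemma hasSum_mem_ideal' {R : Type*} [NormedRing R] {m : Ideal R}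
    (hcl : IsClosed (m : Set R)) {f : ℕ → R} {s : R} (hf : HasSum f s)
    (hmem : ∀ n, f n ∈ m) : s ∈ m :=
  hcl.mem_of_tendsto hf (Filter.Eventually.of_forall fun F => sum_mem fun i _ => hmem i)

/-- Zemánek-type criterion: if `r(a + c) = r(c)` for every `c`, then `a` lies in the
Jacobson radical (as the intersection of all maximal left ideals). -/
private lemma mem_jacobson_bot_of_spectralRadius_add {a : A}
    (h : ∀ c : A, spectralRadius ℂ (a + c) = spectralRadius ℂ c) :
    a ∈ Ideal.jacobson (⊥ : Ideal A) := by
  rw [Ideal.jacobson]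
  rw [Ideal.mem_sInf]
  rintro m ⟨-, hm⟩
  by_contra ham
  haveI := hm
  have hcl : IsClosed (m : Set A) := Ideal.IsMaximal.isClosed
  have hra : spectralRadius ℂ a = 0 := by simpa using h 0
  have hrna : spectralRadius ℂ (-a) = 0 := by
    have h1 := h (-a)
    rw [add_neg_cancel, spectrum.spectralRadius_zero] at h1
    exact h1.symm
  have hnotm : ∀ μ : ℂ, a - algebraMap ℂ A μ ∉ m := by
    intro μ hmem
    have hns : μ ∈ spectrum ℂ a := by
      rw [spectrum.mem_iff]
      intro hunit
      have h2 : IsUnit (a - algebraMap ℂ A μ) := by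
        have h3 := hunit.neg
        rwa [neg_sub] at h3
      exact hm.ne_top (Ideal.eq_top_of_isUnit_mem m hmem h2)
    have h4 : μ = 0 := eq_zero_of_mem_spectrum_of_radius_zero' hra hns
    rw [h4, map_zero, sub_zero] at hmem
    exact ham hmem
  by_cases hex : ∃ u ∈ m, u * a - 1 ∈ m
  · -- Case (i): use the exponential conjugate  e^u a e^{-u} - a
    obtain ⟨u, hu, hua⟩ := hex
    set v := NormedSpace.exp u with hv
    set w := NormedSpace.exp (-u) with hw
    have hvw : v * w = 1 := by
      rw [hv, hw, ← NormedSpace.exp_add_of_commute_of_mem_ball (𝕂 := ℂ) (Commute.refl u).neg_right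
          (by simp [NormedSpace.expSeries_radius_eq_top]) (by simp [NormedSpace.expSeries_radius_eq_top]), add_neg_cancel,
        NormedSpace.exp_zero]
    have hwv : w * v = 1 := by
      rw [hv, hw, ← NormedSpace.exp_add_of_commute_of_mem_ball (𝕂 := ℂ) (Commute.refl u).neg_left
          (by simp [NormedSpace.expSeries_radius_eq_top]) (by simp [NormedSpace.expSeries_radius_eq_top]), neg_add_cancel,
        NormedSpace.exp_zero]
    set V : Aˣ := ⟨v, w, hvw, hwv⟩ with hV
    have hVc : (V : A) = v := rfl
    have hVinv : (↑V⁻¹ : A) = w := rfl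
    have hconj : ∀ c : A, spectralRadius ℂ (v * a * w + c) = spectralRadius ℂ c := by
      intro c
      calc spectralRadius ℂ (v * a * w + c)
          = spectralRadius ℂ ((V : A) * (a + (↑V⁻¹ : A) * c * (V : A)) * (↑V⁻¹ : A)) := by
            rw [hVc, hVinv]
            congr 1
            have h5 : v * (a + w * c * v) * w = v * a * w + v * (w * c * v) * w := by
              noncomm_ring
            have h6 : v * (w * c * v) * w = (v * w) * c * (v * w) := by noncomm_ring
            rw [h5, h6, hvw, one_mul, mul_one]
        _ = spectralRadius ℂ (a + (↑V⁻¹ : A) * c * (V : A)) :=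
            spectralRadius_units_conjugate' V _
        _ = spectralRadius ℂ ((↑V⁻¹ : A) * c * (V : A)) := h _
        _ = spectralRadius ℂ c := by
            have h7 := spectralRadius_units_conjugate' (R := ℂ) V⁻¹ c
            simpa using h7
    set d := v * a * w - a with hd
    have hrd : spectralRadius ℂ d = 0 := by
      have h8 : d = v * a * w + (-a) := by rw [hd, sub_eq_add_neg]
      rw [h8, hconj (-a), hrna]
    have hunit : IsUnit ((1 : A) - d) := by
      by_contra hnu
      have h9 : (1 : ℂ) ∈ spectrum ℂ d := by
        rw [spectrum.mem_iff]
        simpa using hnu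
      have h10 := eq_zero_of_mem_spectrum_of_radius_zero' hrd h9
      norm_num at h10
    have hexpnegu : w - 1 ∈ m := by
      have h1 := NormedSpace.expSeries_hasSum_exp (𝕂 := ℂ) (-u)
      simp only [NormedSpace.expSeries_apply_eq] at h1
      have h2 : HasSum (fun n : ℕ => ((n ! : ℂ)⁻¹ • (-u) ^ n) - (if n = 0 then (1 : A) else 0))
          (w - 1) := h1.sub (hasSum_ite_eq 0 1)
      refine hasSum_mem_ideal' hcl h2 ?_
      intro n
      match n with
      | 0 => simp
      | (k + 1) =>
        have h3 : (-u) ^ (k + 1) ∈ m := by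
          rw [pow_succ]
          exact m.mul_mem_left _ (neg_mem hu)
        have h4 : ((k + 1)! : ℂ)⁻¹ • (-u) ^ (k + 1) ∈ m := by
          rw [Algebra.smul_def]
          exact m.mul_mem_left _ h3
        simpa using h4
    have hexpua : v * a - a - 1 ∈ m := by
      have h1 := NormedSpace.expSeries_hasSum_exp (𝕂 := ℂ) u
      simp only [NormedSpace.expSeries_apply_eq] at h1
      have h2 : HasSum (fun n : ℕ => ((n ! : ℂ)⁻¹ • u ^ n) * a) (v * a) := h1.mul_right a
      have h3 : HasSum (fun n : ℕ => (if n = 0 then a else 0) + (if n = 1 then (1 : A) else 0))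
          (a + 1) := (hasSum_ite_eq 0 a).add (hasSum_ite_eq 1 1)
      have h4 := h2.sub h3
      have h5 : v * a - (a + 1) ∈ m := by
        refine hasSum_mem_ideal' hcl h4 ?_
        intro n
        match n with
        | 0 => simp
        | 1 => simpa using hua
        | (k + 2) =>
          have hk : u ^ (k + 2) * a ∈ m := by
            have e1 : u ^ (k + 2) * a = (u ^ k * u) * (u * a) := by
              rw [pow_succ, pow_succ, mul_assoc]
            have e2 : (u ^ k * u) * (u * a) = (u ^ k * u) * (u * a - 1) + (u ^ k * u) := by
              rw [mul_sub, mul_one, sub_add_cancel]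
            rw [e1, e2]
            exact m.add_mem (m.mul_mem_left _ hua) (m.mul_mem_left _ hu)
          have h6 : ((k + 2)! : ℂ)⁻¹ • (u ^ (k + 2) * a) ∈ m := by
            rw [Algebra.smul_def]
            exact m.mul_mem_left _ hk
          simpa [smul_mul_assoc] using h6
      rwa [sub_sub]
    have hdm : (1 : A) - d ∈ m := by
      have e3 : d - 1 = (v * a) * (w - 1) + (v * a - a - 1) := by
        rw [hd]; noncomm_ring
      have hd1 : d - 1 ∈ m := by
        rw [e3]
        exact m.add_mem (m.mul_mem_left _ hexpnegu) hexpua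
      have h7 := m.neg_mem hd1
      rwa [neg_sub] at h7
    exact hm.ne_top (Ideal.eq_top_of_isUnit_mem m hdm hunit)
  · -- Case (ii):  m * a ⊆ m ; quotient Banach space argument
    push_neg at hex
    have hma : ∀ x ∈ m, x * a ∈ m := by
      intro x hx
      by_contra hxa
      have hmem : x * a ∈ m ⊔ Submodule.span A {x * a} :=
        Submodule.mem_sup_right (Submodule.mem_span_singleton_self _)
      have hne : m ≠ m ⊔ Submodule.span A {x * a} := by
        intro hEq
        rw [← hEq] at hmem
        exact hxa hmem
      have htop : m ⊔ Submodule.span A {x * a} = ⊤ :=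
        hm.1.2 _ (lt_of_le_of_ne le_sup_left hne)
      have h1 : (1 : A) ∈ m ⊔ Submodule.span A {x * a} := by rw [htop]; trivial
      obtain ⟨y, hy, z, hz, hyz⟩ := Submodule.mem_sup.mp h1
      obtain ⟨c, hc⟩ := Submodule.mem_span_singleton.mp hz
      have h2 : (c * x) * a - 1 ∈ m := by
        have e1 : (c * x) * a - 1 = -y := by
          rw [smul_eq_mul] at hc
          rw [mul_assoc, hc, ← hyz]
          abel
        rw [e1]
        exact m.neg_mem hy
      exact hex (c * x) (m.mul_mem_left c hx) h2
    set m' : Submodule ℂ A := Submodule.restrictScalars ℂ m with hm'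
    haveI hcl' : IsClosed (m' : Set A) := hcl
    have honem : (1 : A) ∉ m := fun h1 => hm.ne_top (m.eq_top_iff_one.mpr h1)
    haveI : Nontrivial (A ⧸ m') := by
      refine ⟨⟨Submodule.Quotient.mk 1, 0, ?_⟩⟩
      rw [Ne, Submodule.Quotient.mk_eq_zero]
      exact honem
    haveI : Nontrivial ((A ⧸ m') →L[ℂ] (A ⧸ m')) := by
      refine ⟨⟨1, 0, ?_⟩⟩
      intro hEq
      obtain ⟨ξ, hξ⟩ := exists_ne (0 : A ⧸ m')
      apply hξ
      have := ContinuousLinearMap.ext_iff.mp hEq ξ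
      simpa using this
    have hker : m' ≤ LinearMap.ker ((m'.mkQ).comp (LinearMap.mulRight ℂ a)) := by
      intro x hx
      rw [LinearMap.mem_ker, LinearMap.comp_apply, LinearMap.mulRight_apply, Submodule.mkQ_apply,
        Submodule.Quotient.mk_eq_zero]
      exact hma x hx
    set T0 : (A ⧸ m') →ₗ[ℂ] (A ⧸ m') :=
      Submodule.liftQ m' ((m'.mkQ).comp (LinearMap.mulRight ℂ a)) hker with hT0
    have hT0mk : ∀ x : A, T0 (Submodule.Quotient.mk x) = Submodule.Quotient.mk (x * a) :=
      fun x => rfl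
    have hbound : ∀ ξ : A ⧸ m', ‖T0 ξ‖ ≤ (‖a‖ + 1) * ‖ξ‖ := by
      intro ξ
      refine le_of_forall_pos_le_add ?_
      intro ε hε
      have hδ : 0 < ε / (‖a‖ + 1) := div_pos hε (by positivity)
      obtain ⟨x, hxmk, hxlt⟩ := Submodule.Quotient.norm_mk_lt ξ hδ
      calc ‖T0 ξ‖ = ‖(Submodule.Quotient.mk (x * a) : A ⧸ m')‖ := by rw [← hxmk, hT0mk]
        _ ≤ ‖x * a‖ := Submodule.Quotient.norm_mk_le _ _
        _ ≤ ‖x‖ * ‖a‖ := norm_mul_le _ _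
        _ ≤ (‖ξ‖ + ε / (‖a‖ + 1)) * (‖a‖ + 1) := by
            refine mul_le_mul (le_of_lt hxlt) (by linarith) (norm_nonneg a) ?_
            positivity
        _ = (‖a‖ + 1) * ‖ξ‖ + (‖a‖ + 1) * (ε / (‖a‖ + 1)) := by ring
        _ ≤ (‖a‖ + 1) * ‖ξ‖ + ε := by
            have h2 : (‖a‖ + 1) * (ε / (‖a‖ + 1)) = ε := mul_div_cancel₀ _ (by positivity)
            rw [h2]
    set T : (A ⧸ m') →L[ℂ] (A ⧸ m') := LinearMap.mkContinuous T0 (‖a‖ + 1) hbound with hT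
    obtain ⟨μ, hμ⟩ := spectrum.nonempty T
    have hbm : a - algebraMap ℂ A μ ∈ m := by
      by_contra hb
      set b := a - algebraMap ℂ A μ with hbdef
      rw [spectrum.mem_iff] at hμ
      apply hμ
      have hfb : IsUnit (T - algebraMap ℂ ((A ⧸ m') →L[ℂ] (A ⧸ m')) μ) := by
        rw [ContinuousLinearMap.isUnit_iff_bijective]
        have key : ∀ x : A, (T - algebraMap ℂ ((A ⧸ m') →L[ℂ] (A ⧸ m')) μ)
            (Submodule.Quotient.mk x) = Submodule.Quotient.mk (x * b) := by
          intro x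
          have h1 : T (Submodule.Quotient.mk x) = Submodule.Quotient.mk (x * a) := hT0mk x
          have h2 : x * algebraMap ℂ A μ = μ • x := by
            rw [← Algebra.commutes μ x, ← Algebra.smul_def]
          rw [ContinuousLinearMap.sub_apply, h1, Algebra.algebraMap_eq_smul_one,
            ContinuousLinearMap.smul_apply, ContinuousLinearMap.one_apply, hbdef, mul_sub, h2,
            Submodule.Quotient.mk_sub, Submodule.Quotient.mk_smul]
        constructor
        · -- injective
          have hker0 : ∀ ξ, (T - algebraMap ℂ ((A ⧸ m') →L[ℂ] (A ⧸ m')) μ) ξ = 0 → ξ = 0 := by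
            intro ξ hξ
            obtain ⟨x, rfl⟩ := Submodule.Quotient.mk_surjective m' ξ
            rw [key x, Submodule.Quotient.mk_eq_zero] at hξ
            rw [Submodule.Quotient.mk_eq_zero]
            -- hξ : x * b ∈ m'
            set K : Ideal A := Submodule.comap (LinearMap.toSpanSingleton A A b) m with hK
            have hmK : m ≤ K := by
              intro y hy
              have h3 : y * b = y * a - algebraMap ℂ A μ * y := by
                rw [hbdef, mul_sub, Algebra.commutes]
              simp only [hK, Submodule.mem_comap, LinearMap.toSpanSingleton_apply, smul_eq_mul]
              rw [h3]
              exact m.sub_mem (hma y hy) (m.mul_mem_left _ hy)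
            have hKne : K ≠ ⊤ := by
              intro hKtop
              have h4 : (1 : A) ∈ K := by rw [hKtop]; trivial
              simp only [hK, Submodule.mem_comap, LinearMap.toSpanSingleton_apply,
                smul_eq_mul, one_mul] at h4
              exact hb h4
            have hKm : m = K := hm.eq_of_le hKne hmK
            have h5 : x ∈ K := by
              simp only [hK, Submodule.mem_comap, LinearMap.toSpanSingleton_apply, smul_eq_mul]
              exact hξ
            rw [← hKm] at h5
            exact h5
          intro ξ η hξη
          have h6 := hker0 (ξ - η) (by rw [map_sub, hξη, sub_self])
          exact sub_eq_zero.mp h6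
        · -- surjective
          intro η
          obtain ⟨y, rfl⟩ := Submodule.Quotient.mk_surjective m' η
          have hmem : b ∈ m ⊔ Submodule.span A {b} :=
            Submodule.mem_sup_right (Submodule.mem_span_singleton_self _)
          have hne : m ≠ m ⊔ Submodule.span A {b} := by
            intro hEq
            rw [← hEq] at hmem
            exact hb hmem
          have htop : m ⊔ Submodule.span A {b} = ⊤ :=
            hm.1.2 _ (lt_of_le_of_ne le_sup_left hne)
          have hy : y ∈ m ⊔ Submodule.span A {b} := by rw [htop]; trivial
          obtain ⟨w', hw', z, hz, hwz⟩ := Submodule.mem_sup.mp hy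
          obtain ⟨c, hc⟩ := Submodule.mem_span_singleton.mp hz
          refine ⟨Submodule.Quotient.mk c, ?_⟩
          rw [key c, Submodule.Quotient.eq]
          have e4 : c * b - y = -w' := by
            rw [smul_eq_mul] at hc
            rw [hc, ← hwz]
            abel
          rw [e4]
          exact neg_mem hw'
      have h7 := hfb.neg
      rwa [neg_sub] at h7
    exact hnotm μ hbm

end Helpers

/-- The Jacobson radical of a ring: the Jacobson radical of the zero two-sided ideal. -/
def jacobsonRadical (A : Type*) [Ring A] : TwoSidedIdeal A :=
  TwoSidedIdeal.jacobson (⊥ : TwoSidedIdeal A)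

/-- Let `S` be a unital surjective spectral isometry of a unital complex Banach algebra `B`
and let `I` be a closed two-sided ideal such that the quotient `B/I` is semisimple.
(The quotient is modelled by a surjective algebra homomorphism `π : B → C` onto a unital
complex Banach algebra `C` with closed kernel `I`.)  If `r(Sy + I) = r(y + I)` for all
`y ∈ B`, then `S(I) ⊆ I`. -/
theorem spectral_isometry_preserves_ideal
    {B C : Type*} [NormedRing B] [NormedAlgebra ℂ B] [CompleteSpace B]
    [NormedRing C] [NormedAlgebra ℂ C] [CompleteSpace C]
    (S : B →ₗ[ℂ] B) (hunital : S 1 = 1) (hSsurj : Function.Surjective S)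
    (hspec : ∀ y : B, spectralRadius ℂ (S y) = spectralRadius ℂ y)
    (π : B →ₐ[ℂ] C) (hπsurj : Function.Surjective π)
    (hclosed : IsClosed {x : B | π x = 0})
    (hsemisimple : jacobsonRadical C = ⊥)
    (hquot : ∀ y : B, spectralRadius ℂ (π (S y)) = spectralRadius ℂ (π y)) :
    ∀ x : B, π x = 0 → π (S x) = 0 := by
  intro x hx
  set a := π (S x) with ha
  have hkey : ∀ c : C, spectralRadius ℂ (a + c) = spectralRadius ℂ c := by
    intro c
    obtain ⟨z, hz⟩ : ∃ z : B, π (S z) = c := (hπsurj.comp hSsurj) c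
    calc spectralRadius ℂ (a + c)
        = spectralRadius ℂ (π (S (x + z))) := by rw [map_add, map_add, ha, hz]
      _ = spectralRadius ℂ (π (x + z)) := hquot (x + z)
      _ = spectralRadius ℂ (π z) := by rw [map_add, hx, zero_add]
      _ = spectralRadius ℂ (π (S z)) := (hquot z).symm
      _ = spectralRadius ℂ c := by rw [hz]
  have hjac : a ∈ Ideal.jacobson (⊥ : Ideal C) :=
    mem_jacobson_bot_of_spectralRadius_add hkey
  have hrad : a ∈ jacobsonRadical C := by
    rw [jacobsonRadical, TwoSidedIdeal.mem_jacobson_iff]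
    intro y
    obtain ⟨z, hz⟩ := Ideal.mem_jacobson_iff.mp hjac y
    refine ⟨z, ?_⟩
    rw [TwoSidedIdeal.mem_bot]
    exact (Ideal.mem_bot).mp hz
  rw [hsemisimple] at hrad
  exact (TwoSidedIdeal.mem_bot (R := C)).mp hrad
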